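/- Let τ ∈ (2,3) and for j ≥ 1 set g_j = (-1)^{j-1}·C(τ-2, j), with distribution function G_τ(x) = ∑_{1≤j≤⌊x⌋} g_j. Then there exists a constant C > 0 such that for all sufficiently large x, x^{-(τ-2)-C/ log x} ≤ 1 - G_τ(x) ≤ x^{-(τ-2)+C/ log x}; in other words, the offspring distribution with generating function 1-(1-s)^{τ-2} satisfies Davies' condition with α = τ-2 and γ(x) = C(log x)^{-1}. -/

import Mathlib

open scoped BigOperators

private lemma factor_nonneg {α : ℝ} (hα1 : α < 1) (i : ℕ) :
    0 ≤ 1 - α / ((i : ℝ) + 1) := by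
  have hi : (0 : ℝ) ≤ (i : ℝ) := Nat.cast_nonneg i
  have hpos : (0 : ℝ) < (i : ℝ) + 1 := by positivity
  rw [sub_nonneg, div_le_one hpos]
  linarith

private lemma prod_eq_binom (α : ℝ) (n : ℕ) :
    ∏ i ∈ Finset.range n, (1 - α / ((i : ℝ) + 1)) =
      (-1 : ℝ) ^ n * ((∏ i ∈ Finset.range n, (α - 1 - (i : ℝ))) / (Nat.factorial n : ℝ)) := by
  induction n with
  | zero => simp
  | succ n ih =>
    rw [Finset.prod_range_succ, ih, Finset.prod_range_succ, pow_succ, Nat.factorial_succ]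
    have h1 : ((n : ℝ) + 1) ≠ 0 := by positivity
    have h2 : (Nat.factorial n : ℝ) ≠ 0 := Nat.cast_ne_zero.mpr (Nat.factorial_ne_zero n)
    push_cast
    field_simp
    ring

private lemma tail_eq (τ : ℝ) (g : ℕ → ℝ)
    (hg : ∀ j : ℕ, g j = (-1 : ℝ) ^ (j - 1) *
      ((∏ i ∈ Finset.range j, (τ - 2 - (i : ℝ))) / (Nat.factorial j : ℝ))) (n : ℕ) :
    1 - ∑ j ∈ Finset.Icc 1 n, g j
      = ∏ i ∈ Finset.range n, (1 - (τ - 2) / ((i : ℝ) + 1)) := by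
  induction n with
  | zero => simp
  | succ n ih =>
    have hgs : g (n + 1) = (∏ i ∈ Finset.range n, (1 - (τ - 2) / ((i : ℝ) + 1)))
        * ((τ - 2) / ((n : ℝ) + 1)) := by
      rw [hg (n + 1), Nat.add_sub_cancel, prod_eq_binom (τ - 2) n,
        Finset.prod_range_succ' (fun i => (τ - 2 - (i : ℝ))) n]
      have hprod : (∏ i ∈ Finset.range n, (τ - 2 - ((i + 1 : ℕ) : ℝ)))
          = ∏ i ∈ Finset.range n, (τ - 2 - 1 - (i : ℝ)) :=
        Finset.prod_congr rfl fun i _ => by push_cast; ring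
      rw [hprod, Nat.factorial_succ]
      have h1 : ((n : ℝ) + 1) ≠ 0 := by positivity
      have h2 : (Nat.factorial n : ℝ) ≠ 0 := Nat.cast_ne_zero.mpr (Nat.factorial_ne_zero n)
      push_cast
      field_simp
      ring
    rw [← ih] at hgs
    rw [Finset.sum_Icc_succ_top (by omega : 1 ≤ n + 1), Finset.prod_range_succ, ← ih, hgs]
    ring

private lemma upper_bound {α : ℝ} (hα0 : 0 < α) (hα1 : α < 1) (n : ℕ) :
    ∏ i ∈ Finset.range n, (1 - α / ((i : ℝ) + 1)) ≤ ((n : ℝ) + 1) ^ (-α) := by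
  induction n with
  | zero => simp
  | succ n ih =>
    rw [Finset.prod_range_succ]
    have hn1 : (0 : ℝ) < (n : ℝ) + 1 := by positivity
    have hn2 : (0 : ℝ) < (n : ℝ) + 2 := by positivity
    have hfac : 1 - α / ((n : ℝ) + 1) ≤ (((n : ℝ) + 1) / ((n : ℝ) + 2)) ^ α := by
      have hs : (-1 : ℝ) ≤ 1 / ((n : ℝ) + 1) := by
        have : (0 : ℝ) ≤ 1 / ((n : ℝ) + 1) := by positivity
        linarith
      have hb := rpow_one_add_le_one_add_mul_self hs hα0.le hα1.le
      have he : (1 : ℝ) + 1 / ((n : ℝ) + 1) = ((n : ℝ) + 2) / ((n : ℝ) + 1) := by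
        field_simp; ring
      rw [he] at hb
      set B := (((n : ℝ) + 2) / ((n : ℝ) + 1)) ^ α with hB
      have hBpos : 0 < B := Real.rpow_pos_of_pos (by positivity) α
      have key : (1 - α / ((n : ℝ) + 1)) * B ≤ 1 := by
        have h1 : (1 - α / ((n : ℝ) + 1)) * B
            ≤ (1 - α / ((n : ℝ) + 1)) * (1 + α * (1 / ((n : ℝ) + 1))) :=
          mul_le_mul_of_nonneg_left hb (factor_nonneg hα1 n)
        have h2 : (1 - α / ((n : ℝ) + 1)) * (1 + α * (1 / ((n : ℝ) + 1))) ≤ 1 := by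
          have := sq_nonneg (α / ((n : ℝ) + 1))
          have hd : α * (1 / ((n : ℝ) + 1)) = α / ((n : ℝ) + 1) := by ring
          nlinarith [sq_nonneg (α / ((n : ℝ) + 1))]
        linarith
      have hinv : (((n : ℝ) + 1) / ((n : ℝ) + 2)) ^ α = B⁻¹ := by
        rw [hB, ← Real.inv_rpow (by positivity : (0:ℝ) ≤ ((n : ℝ) + 2) / ((n : ℝ) + 1))]
        norm_num
      rw [hinv, ← one_div]
      exact (le_div_iff₀ hBpos).2 key
    have hP0 : 0 ≤ ∏ i ∈ Finset.range n, (1 - α / ((i : ℝ) + 1)) :=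
      Finset.prod_nonneg fun i _ => factor_nonneg hα1 i
    have hmul := mul_le_mul ih hfac (factor_nonneg hα1 n)
      (le_of_lt (Real.rpow_pos_of_pos hn1 (-α)))
    refine hmul.trans (le_of_eq ?_)
    have hcast : ((n + 1 : ℕ) : ℝ) + 1 = (n : ℝ) + 2 := by push_cast; ring
    rw [hcast, Real.div_rpow hn1.le hn2.le, Real.rpow_neg hn1.le, Real.rpow_neg hn2.le]
    have hne1 : ((n : ℝ) + 1) ^ α ≠ 0 := by positivity
    have hne2 : ((n : ℝ) + 2) ^ α ≠ 0 := by positivity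
    field_simp

private lemma lower_bound {α : ℝ} (hα0 : 0 < α) (hα1 : α < 1) (n : ℕ) (hn : 1 ≤ n) :
    (1 - α) * (n : ℝ) ^ (-α) ≤ ∏ i ∈ Finset.range n, (1 - α / ((i : ℝ) + 1)) := by
  induction n, hn using Nat.le_induction with
  | base => simp
  | succ n hn ih =>
    rw [Finset.prod_range_succ]
    have hn0 : (0 : ℝ) < (n : ℝ) := by exact_mod_cast hn
    have hn1 : (0 : ℝ) < (n : ℝ) + 1 := by positivity
    have hfac : ((n : ℝ) / ((n : ℝ) + 1)) ^ α ≤ 1 - α / ((n : ℝ) + 1) := by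
      have hs : (-1 : ℝ) ≤ -(1 / ((n : ℝ) + 1)) := by
        have : 1 / ((n : ℝ) + 1) ≤ 1 := by rw [div_le_one hn1]; linarith
        linarith
      have hb := rpow_one_add_le_one_add_mul_self hs hα0.le hα1.le
      have he : (1 : ℝ) + -(1 / ((n : ℝ) + 1)) = (n : ℝ) / ((n : ℝ) + 1) := by
        field_simp
        ring
      rw [he] at hb
      exact hb.trans (le_of_eq (by ring))
    have h1 : (1 - α) * (n : ℝ) ^ (-α) * (((n : ℝ) / ((n : ℝ) + 1)) ^ α)
        ≤ (∏ i ∈ Finset.range n, (1 - α / ((i : ℝ) + 1))) * (1 - α / ((n : ℝ) + 1)) :=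
      mul_le_mul ih hfac (by positivity)
        (Finset.prod_nonneg fun i _ => factor_nonneg hα1 i)
    refine le_trans (le_of_eq ?_) h1
    have hcast : ((n + 1 : ℕ) : ℝ) = (n : ℝ) + 1 := by push_cast; ring
    rw [hcast, Real.div_rpow hn0.le hn1.le, Real.rpow_neg hn0.le, Real.rpow_neg hn1.le]
    have hne1 : ((n : ℝ)) ^ α ≠ 0 := by positivity
    have hne2 : ((n : ℝ) + 1) ^ α ≠ 0 := by positivity
    field_simp

theorem stmt_19 (τ : ℝ) (hτ1 : 2 < τ) (hτ2 : τ < 3)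
    (g : ℕ → ℝ)
    (hg : ∀ j : ℕ, g j = (-1 : ℝ) ^ (j - 1) *
      ((∏ i ∈ Finset.range j, (τ - 2 - (i : ℝ))) / (Nat.factorial j : ℝ)))
    (Gτ : ℝ → ℝ)
    (hGτ : ∀ x, Gτ x = ∑ j ∈ Finset.Icc 1 ⌊x⌋₊, g j) :
    ∃ C : ℝ, 0 < C ∧ ∃ x₀ : ℝ, 1 < x₀ ∧ ∀ x : ℝ, x₀ ≤ x →
      x ^ (-(τ - 2) - C / Real.log x) ≤ 1 - Gτ x ∧
      1 - Gτ x ≤ x ^ (-(τ - 2) + C / Real.log x) := by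
  have hα0 : 0 < τ - 2 := by linarith
  have hα1 : τ - 2 < 1 := by linarith
  have h3τ : 0 < 3 - τ := by linarith
  have h3τ1 : 3 - τ < 1 := by linarith
  have hCpos : 0 < -Real.log (3 - τ) := by
    have := Real.log_neg h3τ h3τ1; linarith
  refine ⟨-Real.log (3 - τ), hCpos, 2, one_lt_two, fun x hx => ?_⟩
  have hx1 : (1 : ℝ) < x := by linarith
  have hx0 : (0 : ℝ) < x := by linarith
  have hlog : (0 : ℝ) < Real.log x := Real.log_pos hx1
  set n := ⌊x⌋₊ with hn
  have hn1 : 1 ≤ n := Nat.le_floor (by exact_mod_cast hx1.le)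
  have hnx : (n : ℝ) ≤ x := Nat.floor_le hx0.le
  have hxn : x ≤ (n : ℝ) + 1 := (Nat.lt_floor_add_one x).le
  have hnpos : (0 : ℝ) < (n : ℝ) := by exact_mod_cast hn1
  have htail : 1 - Gτ x = ∏ i ∈ Finset.range n, (1 - (τ - 2) / ((i : ℝ) + 1)) := by
    rw [hGτ]; exact tail_eq τ g hg n
  have hxC : x ^ ((-Real.log (3 - τ)) / Real.log x) = (3 - τ)⁻¹ := by
    rw [Real.rpow_def_of_pos hx0]
    have : Real.log x * ((-Real.log (3 - τ)) / Real.log x) = -Real.log (3 - τ) := by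
      field_simp
    rw [this, Real.exp_neg, Real.exp_log h3τ]
  constructor
  · rw [htail, Real.rpow_sub hx0, hxC, div_inv_eq_mul]
    have h1 : x ^ (-(τ - 2)) ≤ (n : ℝ) ^ (-(τ - 2)) :=
      Real.rpow_le_rpow_of_nonpos hnpos hnx (by linarith)
    calc x ^ (-(τ - 2)) * (3 - τ) ≤ (n : ℝ) ^ (-(τ - 2)) * (3 - τ) :=
          mul_le_mul_of_nonneg_right h1 h3τ.le
      _ = (1 - (τ - 2)) * (n : ℝ) ^ (-(τ - 2)) := by ring
      _ ≤ _ := lower_bound hα0 hα1 n hn1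
  · rw [htail, Real.rpow_add hx0, hxC]
    have h1 : ((n : ℝ) + 1) ^ (-(τ - 2)) ≤ x ^ (-(τ - 2)) :=
      Real.rpow_le_rpow_of_nonpos hx0 hxn (by linarith)
    have h2 : (1 : ℝ) ≤ (3 - τ)⁻¹ := by
      rw [one_le_inv_iff₀]; exact ⟨h3τ, by linarith⟩
    calc (∏ i ∈ Finset.range n, (1 - (τ - 2) / ((i : ℝ) + 1)))
        ≤ ((n : ℝ) + 1) ^ (-(τ - 2)) := upper_bound hα0 hα1 n
      _ ≤ x ^ (-(τ - 2)) := h1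
      _ ≤ x ^ (-(τ - 2)) * (3 - τ)⁻¹ :=
          le_mul_of_one_le_right (le_of_lt (Real.rpow_pos_of_pos hx0 _)) h2
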